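/- Let 0 ≤ α ≤ (1+√3)/2 and let t be real with √(2/(α²+3α+1)) ≤ t ≤ 2/(1+α). Then ((α²+3α+1)/(4(1+2α))) t² - (1/2)t - 1/(2(1+2α)) ≥ -1/√(2(α²+3α+1)). -/

import Mathlib

theorem stmt_10 (α t : ℝ) (hα : 0 ≤ α) (hα2 : α ≤ (1 + Real.sqrt 3) / 2)
    (ht1 : Real.sqrt (2 / (α ^ 2 + 3 * α + 1)) ≤ t) (ht2 : t ≤ 2 / (1 + α)) :
    ((α ^ 2 + 3 * α + 1) / (4 * (1 + 2 * α))) * t ^ 2 - (1 / 2) * t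
      - 1 / (2 * (1 + 2 * α)) ≥ -(1 / Real.sqrt (2 * (α ^ 2 + 3 * α + 1))) := by
  set A : ℝ := α ^ 2 + 3 * α + 1 with hAdef
  have hA : 0 < A := by nlinarith
  set s : ℝ := Real.sqrt (2 / A) with hsdef
  have hs0 : 0 ≤ s := Real.sqrt_nonneg _
  have hs2 : s ^ 2 = 2 / A := Real.sq_sqrt (by positivity)
  have hs2' : A * s ^ 2 = 2 := by rw [hs2]; field_simp
  -- √3 facts
  clear_value A s
  have h3 : Real.sqrt 3 ^ 2 = 3 := Real.sq_sqrt (by norm_num)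
  have h3n : 0 ≤ Real.sqrt 3 := Real.sqrt_nonneg _
  -- 2A ≥ (1+2α)^2
  have h31 : (1:ℝ) ≤ Real.sqrt 3 := by nlinarith
  have hkey : (1 + 2 * α) ^ 2 ≤ 2 * A := by
    have hp : 0 ≤ (Real.sqrt 3 - (2 * α - 1)) * (Real.sqrt 3 + (2 * α - 1)) :=
      mul_nonneg (by linarith) (by linarith)
    nlinarith
  -- A * s = √(2A)
  have hAs : (A * s) ^ 2 = 2 * A := by
    have : (A * s) ^ 2 = A ^ 2 * s ^ 2 := by ring
    rw [this, hs2]; field_simp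
  have hAsge : 1 + 2 * α ≤ A * s := by
    have h1 : 0 ≤ A * s := by positivity
    nlinarith
  -- 1/√(2A) = s/2
  have hrhs : 1 / Real.sqrt (2 * A) = s / 2 := by
    have h2A : Real.sqrt (2 * A) = A * s := by
      rw [show (2 : ℝ) * A = (A * s) ^ 2 from hAs.symm]
      exact Real.sqrt_sq (by positivity)
    rw [h2A]
    have hApos : (0:ℝ) < A * s := lt_of_lt_of_le (by nlinarith) hAsge
    field_simp
    have hsne : s ≠ 0 := by rintro rfl; simp at hApos
    field_simp
    nlinarith [hs2']
  rw [hrhs]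
  have h12 : (0:ℝ) < 1 + 2 * α := by linarith
  have hfact : 0 ≤ (t - s) * (A * (t + s) - 2 * (1 + 2 * α)) := by
    have hAt : A * s ≤ A * t := mul_le_mul_of_nonneg_left ht1 hA.le
    apply mul_nonneg (by linarith)
    nlinarith [hAt, hAsge]
  have hineq : 0 ≤ A * t ^ 2 - 2 * (1 + 2 * α) * t - 2 + 2 * (1 + 2 * α) * s := by
    nlinarith [hfact, hs2', sq_nonneg (t - s)]
  have h4 : (0:ℝ) < 4 * (1 + 2 * α) := by linarith
  have heq : A / (4 * (1 + 2 * α)) * t ^ 2 - 1 / 2 * t - 1 / (2 * (1 + 2 * α)) - (-(s / 2))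
      = (A * t ^ 2 - 2 * (1 + 2 * α) * t - 2 + 2 * (1 + 2 * α) * s) / (4 * (1 + 2 * α)) := by
    field_simp
    ring
  have hd := div_nonneg hineq h4.le
  rw [ge_iff_le, ← sub_nonneg]
  rw [heq] at *
  positivity
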